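/- Let k ≥ 3 and m ≥ 1 be integers and let q ∈ (1,2) with q > q_{k−1}. If the intersection ⋂_{i=0}^m g_{q,k}^i(π_q(S_{k−1}) + 1) ∩ g_{q,k}^m(π_q(S_{k−1})) is nonempty, then q ∈ B_{m+2}. -/

import Mathlib

open Set

/-- Projection map: the value of the (0-indexed) digit sequence `a` in base `q`,
`π_q(a) = Σ_{j=0}^∞ a_j q^{-(j+1)}`. -/
noncomputable def piQ (q : ℝ) (a : ℕ → ℝ) : ℝ := ∑' j : ℕ, a j / q ^ (j + 1)

/-- `a` is a sequence of digits in `{0,1}`. -/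
def IsDigitSeq (a : ℕ → ℝ) : Prop := ∀ j, a j = 0 ∨ a j = 1

/-- `a` is a sequence of digits in `{-1,0,1}`. -/
def IsExtDigitSeq (a : ℕ → ℝ) : Prop := ∀ j, a j = -1 ∨ a j = 0 ∨ a j = 1

/-- The set of base-`q` expansions of `x`. -/
def SigmaSet (q x : ℝ) : Set (ℕ → ℝ) := {a | IsDigitSeq a ∧ piQ q a = x}

/-- The interval `I_q = [0, 1/(q-1)]`. -/
def Iq (q : ℝ) : Set ℝ := Set.Icc 0 (1 / (q - 1))

/-- The switch region `J_q = [1/q, 1/(q(q-1))]`. -/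
def Jq (q : ℝ) : Set ℝ := Set.Icc (1 / q) (1 / (q * (q - 1)))

/-- The set of points of `I_q` having exactly `m` base-`q` expansions. -/
def UqM (q : ℝ) (m : ℕ∞) : Set ℝ := {x | x ∈ Iq q ∧ (SigmaSet q x).encard = m}

/-- The set of points of `I_q` having a unique base-`q` expansion. -/
def Uq (q : ℝ) : Set ℝ := UqM q 1

/-- `B_m`: the set of bases `q ∈ (1,2)` for which some point has exactly `m` expansions. -/
def Bset (m : ℕ∞) : Set ℝ := {q | q ∈ Set.Ioo (1 : ℝ) 2 ∧ (UqM q m).Nonempty}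

/-- `x` is the `k`-Bonacci number: the root in `(1,2)` of `x^k = x^{k-1} + ⋯ + x + 1`. -/
def IsBonacci (k : ℕ) (x : ℝ) : Prop :=
  x ∈ Set.Ioo (1 : ℝ) 2 ∧ x ^ k = ∑ i ∈ Finset.range k, x ^ i

/-- `a` contains no occurrence of the word `01^k` as a consecutive block. -/
def AvoidsWord01 (k : ℕ) (a : ℕ → ℝ) : Prop :=
  ∀ i, ¬(a i = 0 ∧ ∀ j, 1 ≤ j → j ≤ k → a (i + j) = 1)

/-- `a` contains no occurrence of the word `10^k` as a consecutive block. -/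
def AvoidsWord10 (k : ℕ) (a : ℕ → ℝ) : Prop :=
  ∀ i, ¬(a i = 1 ∧ ∀ j, 1 ≤ j → j ≤ k → a (i + j) = 0)

/-- `S_k`: the set of `{0,1}`-sequences avoiding the words `01^k` and `10^k`. -/
def Sset (k : ℕ) : Set (ℕ → ℝ) := {a | IsDigitSeq a ∧ AvoidsWord01 k a ∧ AvoidsWord10 k a}

/-- `g_{q,k} = f_1^{-(k-1)} ∘ f_0^{-1}`, where `f_0^{-1}(y) = y/q` and `f_1^{-1}(y) = (y+1)/q`. -/
noncomputable def gMap (q : ℝ) (k : ℕ) (x : ℝ) : ℝ := (fun y => (y + 1) / q)^[k - 1] (x / q)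

/-- The maps `f_0(x) = qx` (for `b = false`) and `f_1(x) = qx - 1` (for `b = true`). -/
noncomputable def fDigit (q : ℝ) (b : Bool) (x : ℝ) : ℝ := if b then q * x - 1 else q * x

/-- `(a, b)` is a bounded gap of `C`: a bounded connected component of `ℝ \ C`. -/
def IsGap (C : Set ℝ) (a b : ℝ) : Prop :=
  a < b ∧ a ∈ C ∧ b ∈ C ∧ Set.Ioo a b ∩ C = ∅

/-- The left endpoint of the bridge of `C` lying immediately to the left of the gap `(a, b)`:
the right endpoint of the nearest gap to the left having diameter at least `b - a`
(or `min C` if there is no such gap). -/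
noncomputable def leftBridgeStart (C : Set ℝ) (a b : ℝ) : ℝ :=
  sSup ({sInf C} ∪ {d | ∃ c, IsGap C c d ∧ d ≤ a ∧ b - a ≤ d - c})

/-- The right endpoint of the bridge of `C` lying immediately to the right of the gap `(a, b)`. -/
noncomputable def rightBridgeEnd (C : Set ℝ) (a b : ℝ) : ℝ :=
  sInf ({sSup C} ∪ {c | ∃ d, IsGap C c d ∧ b ≤ c ∧ b - a ≤ d - c})

/-- The (Newhouse) thickness of a compact set `C ⊆ ℝ`: the infimum over all bounded gaps `G`
of the ratio of the length of the bridge on either side of `G` to the length of `G`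
(`∞` if `C` has no bounded gap). -/
noncomputable def thickness (C : Set ℝ) : ENNReal :=
  ⨅ p : {p : ℝ × ℝ // IsGap C p.1 p.2},
    ENNReal.ofReal
      (min ((p.1.1 - leftBridgeStart C p.1.1 p.1.2) / (p.1.2 - p.1.1))
        ((rightBridgeEnd C p.1.1 p.1.2 - p.1.2) / (p.1.2 - p.1.1)))

/-- `B` is contained in a gap of `A`, i.e. in a connected component of `ℝ \ A`. -/
def ContainedInGap (B A : Set ℝ) : Prop :=
  ∃ x ∈ Aᶜ, B ⊆ connectedComponentIn Aᶜ x

/-- Two sets are interleaved if neither is contained in a gap of the other. -/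
def Interleaved (A B : Set ℝ) : Prop :=
  ¬ContainedInGap B A ∧ ¬ContainedInGap A B

/-- `A` and `B` are `ε`-strongly interleaved: any compact sets within Hausdorff distance `ε`
of `A` and `B` respectively are interleaved. -/
def StronglyInterleaved (ε : ℝ) (A B : Set ℝ) : Prop :=
  ∀ A' B' : Set ℝ, IsCompact A' → IsCompact B' →
    EMetric.hausdorffEdist A A' ≤ ENNReal.ofReal ε →
    EMetric.hausdorffEdist B B' ≤ ENNReal.ofReal ε → Interleaved A' B'

/-- The sequence `0^{k-3}(01^{k-1})^∞` (0-indexed). -/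
noncomputable def seqG (k : ℕ) : ℕ → ℝ := fun j =>
  if j < k - 3 then 0 else if (j - (k - 3)) % k = 0 then 0 else 1

/-- The sequence `1^{k-3}(10^{k-1})^∞` (0-indexed). -/
noncomputable def seqH (k : ℕ) : ℕ → ℝ := fun j =>
  if j < k - 3 then 1 else if (j - (k - 3)) % k = 0 then 1 else 0

/-- The sequence `(1^{k-1}0)^∞` (0-indexed). -/
noncomputable def seqP (k : ℕ) : ℕ → ℝ := fun j => if j % k = k - 1 then 0 else 1


-- ====== auxiliary development ======

namespace MultExp

/-- shift of a sequence by `n`. -/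
def shf (n : ℕ) (a : ℕ → ℝ) : ℕ → ℝ := fun j => a (j + n)

lemma shf_zero (a : ℕ → ℝ) : shf 0 a = a := rfl

lemma shf_shf (n m : ℕ) (a : ℕ → ℝ) : shf m (shf n a) = shf (n + m) a := by
  funext j; show a (j + m + n) = a (j + (n + m)); congr 1; omega

lemma shf_digit {a : ℕ → ℝ} (h : IsDigitSeq a) (n : ℕ) : IsDigitSeq (shf n a) :=
  fun j => h (j + n)

lemma digit_nonneg {a : ℕ → ℝ} (h : IsDigitSeq a) (j : ℕ) : 0 ≤ a j := by
  rcases h j with h' | h' <;> simp [h']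

lemma digit_le_one {a : ℕ → ℝ} (h : IsDigitSeq a) (j : ℕ) : a j ≤ 1 := by
  rcases h j with h' | h' <;> simp [h']

variable {q : ℝ}

lemma inv_q_pos (hq : 1 < q) : 0 < 1/q := by positivity
lemma inv_q_lt_one (hq : 1 < q) : 1/q < 1 := by
  rw [div_lt_one (by linarith)]; linarith

lemma summable_geom_aux (hq : 1 < q) : Summable (fun j : ℕ => (1/q)^(j+1)) := by
  simpa [pow_succ] using
    (summable_geometric_of_lt_one (le_of_lt (inv_q_pos hq)) (inv_q_lt_one hq)).mul_right (1/q)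

lemma summable_aux (hq : 1 < q) {a : ℕ → ℝ} (h0 : ∀ j, 0 ≤ a j) (h1 : ∀ j, a j ≤ 1) :
    Summable fun j => a j / q ^ (j+1) := by
  have hq0 : (0:ℝ) < q := by linarith
  refine Summable.of_nonneg_of_le (fun j => div_nonneg (h0 j) (by positivity)) (fun j => ?_)
    (summable_geom_aux hq)
  rw [one_div_pow]
  exact div_le_div_of_nonneg_right (h1 j) (by positivity)

lemma summable_digit (hq : 1 < q) {a : ℕ → ℝ} (hd : IsDigitSeq a) :
    Summable fun j => a j / q ^ (j+1) :=
  summable_aux hq (digit_nonneg hd) (digit_le_one hd)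

lemma tsum_geom_aux (hq : 1 < q) : ∑' j : ℕ, (1/q)^(j+1) = 1/(q-1) := by
  have hq0 : (0:ℝ) < q := by linarith
  have h : ∑' j : ℕ, (1/q)^(j+1) = (∑' j : ℕ, (1/q)^j) * (1/q) := by
    simp_rw [pow_succ]; exact tsum_mul_right
  rw [h, tsum_geometric_of_lt_one (le_of_lt (inv_q_pos hq)) (inv_q_lt_one hq)]
  have hne : q ≠ 0 := by linarith
  have hne1 : q - 1 ≠ 0 := by linarith
  have h2 : (1 - 1/q) = (q-1)/q := by field_simp
  rw [h2, inv_div]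
  field_simp

lemma piQ_nonneg (hq : 1 < q) {a : ℕ → ℝ} (hd : IsDigitSeq a) : 0 ≤ piQ q a := by
  have hq0 : (0:ℝ) < q := by linarith
  exact tsum_nonneg fun j => by have := digit_nonneg hd j; positivity

lemma piQ_le (hq : 1 < q) {a : ℕ → ℝ} (hd : IsDigitSeq a) : piQ q a ≤ 1/(q-1) := by
  have hq0 : (0:ℝ) < q := by linarith
  rw [← tsum_geom_aux hq]
  refine Summable.tsum_le_tsum (fun j => ?_) (summable_digit hq hd) (summable_geom_aux hq)
  rw [one_div_pow]
  exact div_le_div_of_nonneg_right (digit_le_one hd j) (by positivity)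

lemma piQ_shift (hq : 1 < q) {a : ℕ → ℝ} (hd : IsDigitSeq a) (n : ℕ) :
    piQ q a = (∑ t ∈ Finset.range n, a t / q^(t+1)) + piQ q (shf n a) / q^n := by
  have hs := summable_digit hq hd
  have h1 : piQ q a = (∑ t ∈ Finset.range n, a t / q^(t+1)) + ∑' i : ℕ, a (i+n) / q^(i+n+1) := by
    rw [piQ, ← Summable.sum_add_tsum_nat_add n hs]
  rw [h1]
  congr 1
  have h2 : ∀ i : ℕ, a (i+n) / q^(i+n+1) = (shf n a) i / q^(i+1) / q^n := by
    intro i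
    rw [show i+n+1 = (i+1)+n by omega, pow_add, ← div_div]
    rfl
  rw [tsum_congr h2, piQ, tsum_div_const]

lemma piQ_step (hq : 1 < q) {a : ℕ → ℝ} (hd : IsDigitSeq a) :
    piQ q a = a 0 / q + piQ q (shf 1 a) / q := by
  have := piQ_shift hq hd 1
  simpa using this

lemma piQ_compl (hq : 1 < q) {a : ℕ → ℝ} (hd : IsDigitSeq a) :
    piQ q (fun j => 1 - a j) = 1/(q-1) - piQ q a := by
  have h1 : ∀ j : ℕ, (1 - a j) / q^(j+1) = (1/q)^(j+1) - a j / q^(j+1) := by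
    intro j; rw [one_div_pow, sub_div]
  rw [piQ, tsum_congr h1, Summable.tsum_sub (summable_geom_aux hq) (summable_digit hq hd),
    tsum_geom_aux hq, piQ]

/-- prepend a digit -/
def dcons (d : ℝ) (e : ℕ → ℝ) : ℕ → ℝ := fun j => if j = 0 then d else e (j - 1)

lemma dcons_zero (d : ℝ) (e : ℕ → ℝ) : dcons d e 0 = d := rfl

lemma dcons_succ (d : ℝ) (e : ℕ → ℝ) (j : ℕ) : dcons d e (j + 1) = e j := by
  simp [dcons]

lemma shf_dcons (d : ℝ) (e : ℕ → ℝ) : shf 1 (dcons d e) = e := by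
  funext j; show dcons d e (j + 1) = e j; exact dcons_succ d e j

lemma dcons_injective (d : ℝ) : Function.Injective (dcons d) := by
  intro e1 e2 h
  funext j
  have := congrFun h (j + 1)
  rwa [dcons_succ, dcons_succ] at this

lemma dcons_digit {d : ℝ} (hd : d = 0 ∨ d = 1) {e : ℕ → ℝ} (he : IsDigitSeq e) :
    IsDigitSeq (dcons d e) := by
  intro j
  cases j with
  | zero => exact hd
  | succ n => rw [dcons_succ]; exact he n

lemma mem_sigma {x : ℝ} {e : ℕ → ℝ} : e ∈ SigmaSet q x ↔ IsDigitSeq e ∧ piQ q e = x :=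
  Iff.rfl

lemma sigma_empty_hi (hq : 1 < q) {x : ℝ} (hx : 1/(q-1) < x) : SigmaSet q x = ∅ := by
  ext e
  simp only [mem_sigma, Set.mem_empty_iff_false, iff_false, not_and]
  intro hd hpi
  exact absurd hpi (by have := piQ_le hq hd; intro h; rw [h] at this; linarith)

lemma tail_mem (hq : 1 < q) {x : ℝ} {e : ℕ → ℝ} (he : e ∈ SigmaSet q x) :
    shf 1 e ∈ SigmaSet q (q*x - e 0) := by
  have hq0 : (0:ℝ) < q := by linarith
  have h := piQ_step hq he.1
  rw [he.2, ← add_div, eq_div_iff hq0.ne'] at h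
  exact ⟨shf_digit he.1 1, by linarith⟩

lemma cons_mem (hq : 1 < q) {y : ℝ} {e : ℕ → ℝ} (he : e ∈ SigmaSet q y)
    {d : ℝ} (hd : d = 0 ∨ d = 1) : dcons d e ∈ SigmaSet q ((y + d)/q) := by
  have hq0 : (0:ℝ) < q := by linarith
  have hdig : IsDigitSeq (dcons d e) := dcons_digit hd he.1
  refine ⟨hdig, ?_⟩
  rw [piQ_step hq hdig, shf_dcons, dcons_zero, he.2]
  ring

lemma sigma_split (hq : 1 < q) (x : ℝ) :
    SigmaSet q x = (dcons 0 '' SigmaSet q (q*x)) ∪ (dcons 1 '' SigmaSet q (q*x - 1)) := by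
  have hq0 : (0:ℝ) < q := by linarith
  ext e
  constructor
  · rintro he
    have hcons : e = dcons (e 0) (shf 1 e) := by
      funext j
      cases j with
      | zero => rfl
      | succ n => rw [dcons_succ]; rfl
    have ht := tail_mem hq he
    rcases he.1 0 with h0 | h0
    · left
      refine ⟨shf 1 e, ?_, ?_⟩
      · rw [h0, sub_zero] at ht; exact ht
      · rw [← h0]; exact hcons.symm
    · right
      refine ⟨shf 1 e, ?_, ?_⟩
      · rw [h0] at ht; exact ht
      · rw [← h0]; exact hcons.symm
  · rintro (⟨e', he', rfl⟩ | ⟨e', he', rfl⟩)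
    · have := cons_mem hq he' (Or.inl rfl)
      rw [add_zero, mul_div_cancel_left₀ _ hq0.ne'] at this
      exact this
    · have := cons_mem hq he' (Or.inr rfl)
      have h2 : (q*x - 1 + 1)/q = x := by field_simp; ring
      rw [h2] at this
      exact this

lemma encard_split (hq : 1 < q) (x : ℝ) :
    (SigmaSet q x).encard = (SigmaSet q (q*x)).encard + (SigmaSet q (q*x - 1)).encard := by
  rw [sigma_split hq x]
  rw [Set.encard_union_eq]
  · rw [(dcons_injective 0).encard_image, (dcons_injective 1).encard_image]
  · rw [Set.disjoint_left]
    rintro e ⟨e1, _, rfl⟩ ⟨e2, _, he⟩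
    have := congrFun he 0
    rw [dcons_zero, dcons_zero] at this
    norm_num at this


lemma Sset_shift {K : ℕ} {a : ℕ → ℝ} (ha : a ∈ Sset K) (n : ℕ) : shf n a ∈ Sset K := by
  obtain ⟨hd, h01, h10⟩ := ha
  refine ⟨shf_digit hd n, ?_, ?_⟩
  · intro i ⟨hi0, hi1⟩
    refine h01 (i + n) ⟨hi0, fun j hj1 hj2 => ?_⟩
    have := hi1 j hj1 hj2
    show a (i + n + j) = 1
    rw [show i + n + j = i + j + n by omega]
    exact this
  · intro i ⟨hi0, hi1⟩
    refine h10 (i + n) ⟨hi0, fun j hj1 hj2 => ?_⟩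
    have := hi1 j hj1 hj2
    show a (i + n + j) = 0
    rw [show i + n + j = i + j + n by omega]
    exact this

lemma Sset_compl {K : ℕ} {a : ℕ → ℝ} (ha : a ∈ Sset K) : (fun j => 1 - a j) ∈ Sset K := by
  obtain ⟨hd, h01, h10⟩ := ha
  refine ⟨fun j => ?_, ?_, ?_⟩
  · rcases hd j with h | h <;> simp [h]
  · intro i ⟨hi0, hi1⟩
    have hi0' : 1 - a i = 0 := hi0
    refine h10 i ⟨by linarith, fun j hj1 hj2 => ?_⟩
    have h' : 1 - a (i + j) = 1 := hi1 j hj1 hj2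
    linarith
  · intro i ⟨hi0, hi1⟩
    have hi0' : 1 - a i = 1 := hi0
    refine h01 i ⟨by linarith, fun j hj1 hj2 => ?_⟩
    have h' : 1 - a (i + j) = 0 := hi1 j hj1 hj2
    linarith

/-- after a `0` in an `S_K` sequence, there is another `0` within the next `K` places;
take the first one. -/
lemma after_zero {K : ℕ} (hK : 1 ≤ K) {a : ℕ → ℝ} (ha : a ∈ Sset K) {i : ℕ} (hi : a i = 0) :
    ∃ p, p ≤ K - 1 ∧ a (i + 1 + p) = 0 ∧ ∀ t, t < p → a (i + 1 + t) = 1 := by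
  classical
  have h01 := ha.2.1 i
  push_neg at h01
  obtain ⟨j, hj1, hj2, hj3⟩ := h01 hi
  have hex : ∃ t, a (i + 1 + t) = 0 := by
    refine ⟨j - 1, ?_⟩
    rcases ha.1 (i + j) with h | h
    · rw [show i + 1 + (j-1) = i + j by omega]; exact h
    · exact absurd h hj3
  refine ⟨Nat.find hex, ?_, Nat.find_spec hex, fun t ht => ?_⟩
  · have : Nat.find hex ≤ j - 1 := Nat.find_le (by
      rcases ha.1 (i + j) with h | h
      · rw [show i + 1 + (j-1) = i + j by omega]; exact h
      · exact absurd h hj3)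
    omega
  · have hmin := Nat.find_min hex ht
    rcases ha.1 (i + 1 + t) with h | h
    · exact absurd h hmin
    · exact h

noncomputable def Cq (q : ℝ) (K : ℕ) : ℝ :=
  (∑ t ∈ Finset.range (K-1), (1/q)^(t+1)) / (1 - (1/q)^K)

noncomputable def Mq (q : ℝ) (K : ℕ) : ℝ := q/(q-1) - Cq q K

lemma one_sub_pow_pos (hq : 1 < q) (K : ℕ) (hK : 1 ≤ K) : 0 < 1 - (1/q)^K := by
  have := pow_lt_one₀ (le_of_lt (inv_q_pos hq)) (inv_q_lt_one hq) (by omega : K ≠ 0)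
  linarith

lemma Cq_nonneg (hq : 1 < q) {K : ℕ} (hK : 1 ≤ K) : 0 ≤ Cq q K := by
  apply div_nonneg
  · apply Finset.sum_nonneg; intro t _; positivity
  · exact le_of_lt (one_sub_pow_pos hq K hK)

lemma Cq_fix (hq : 1 < q) {K : ℕ} (hK : 1 ≤ K) :
    (∑ t ∈ Finset.range (K-1), (1/q)^(t+1)) + (1/q)^K * Cq q K = Cq q K := by
  have h := one_sub_pow_pos hq K hK
  have h2 : Cq q K * (1 - (1/q)^K) = ∑ t ∈ Finset.range (K-1), (1/q)^(t+1) :=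
    div_mul_cancel₀ _ (ne_of_gt h)
  linarith [h2]

lemma sum_telescope_aux (hq : 1 < q) (K : ℕ) (hK : 1 ≤ K) :
    (∑ t ∈ Finset.range (K-1), (1/q)^(t+1)) * (1 - 1/q) = 1/q - (1/q)^K := by
  calc (∑ t ∈ Finset.range (K-1), (1/q)^(t+1)) * (1 - 1/q)
      = ∑ t ∈ Finset.range (K-1), ((1/q)^(t+1) - (1/q)^(t+1+1)) := by
        rw [Finset.sum_mul]
        refine Finset.sum_congr rfl (fun t _ => ?_)
        rw [pow_succ (1/q) (t+1)]
        ring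
    _ = (1/q)^(0+1) - (1/q)^(K-1+1) := Finset.sum_range_sub' (fun t => (1/q)^(t+1)) (K-1)
    _ = 1/q - (1/q)^K := by rw [show K-1+1 = K by omega]; norm_num

lemma Mq_nonneg (hq : 1 < q) {K : ℕ} (hK : 1 ≤ K) : 0 ≤ Mq q K := by
  have hP := one_sub_pow_pos hq K hK
  have ht := sum_telescope_aux hq K hK
  have h1 : 1/q < 1 := inv_q_lt_one hq
  have h2 : (0:ℝ) < 1/q := inv_q_pos hq
  have hK0 : (0:ℝ) < (1/q)^K := by positivity
  rw [Mq, sub_nonneg, Cq, div_le_div_iff₀ hP (by linarith : (0:ℝ) < q - 1)]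
  -- S1 * (q-1) ≤ q * (1 - (1/q)^K)
  -- from S1 * (1 - 1/q) = 1/q - (1/q)^K  and 1-1/q = (q-1)/q
  have h3 : (∑ t ∈ Finset.range (K-1), (1/q)^(t+1)) * ((q-1)/q) = 1/q - (1/q)^K := by
    rw [← ht]; congr 1; field_simp
  have h4 : (∑ t ∈ Finset.range (K-1), (1/q)^(t+1)) * (q-1) = 1 - (1/q)^K * q := by
    have hq0 : q ≠ 0 := by linarith
    have := congrArg (fun z => z * q) h3
    calc (∑ t ∈ Finset.range (K-1), (1/q)^(t+1)) * (q-1)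
        = (∑ t ∈ Finset.range (K-1), (1/q)^(t+1)) * ((q-1)/q) * q := by field_simp
      _ = (1/q - (1/q)^K) * q := by rw [h3]
      _ = 1 - (1/q)^K * q := by field_simp
  rw [h4]
  nlinarith [hK0]

lemma Cq_le (hq : 1 < q) {K : ℕ} (hK : 1 ≤ K) : Cq q K ≤ q/(q-1) := by
  have := Mq_nonneg hq hK
  rw [Mq] at this
  linarith

lemma Cq_lt_one (hq : 1 < q) {K : ℕ} (hK : 1 ≤ K)
    (hG : ∑ t ∈ Finset.range K, (1/q)^(t+1) < 1) : Cq q K < 1 := by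
  have hP := one_sub_pow_pos hq K hK
  rw [Cq, div_lt_one hP]
  have h := Finset.sum_range_succ (fun t => (1/q)^(t+1)) (K-1)
  rw [show K-1+1 = K by omega] at h
  rw [h] at hG
  linarith

lemma mono_aux (hq : 1 < q) {A : ℝ} (hA0 : 0 ≤ A) (hA1 : A * (1 - 1/q) ≤ 1) :
    ∀ d p : ℕ, (∑ t ∈ Finset.range p, (1/q)^(t+1)) + (1/q)^(p+1) * A
      ≤ (∑ t ∈ Finset.range (p+d), (1/q)^(t+1)) + (1/q)^(p+d+1) * A := by
  intro d
  induction d with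
  | zero => intro p; simp
  | succ d ih =>
    intro p
    refine le_trans (ih p) ?_
    rw [show p + (d+1) = (p+d) + 1 by omega, Finset.sum_range_succ]
    have h1 : (0:ℝ) ≤ (1/q)^(p+d+1) := by positivity
    have h2 : (1/q)^(p+d+1+1) = (1/q)^(p+d+1) * (1/q) := pow_succ _ _
    rw [h2]
    nlinarith [mul_le_mul_of_nonneg_left hA1 h1]


lemma tail_bound_N (hq : 1 < q) {K : ℕ} (hK : 1 ≤ K) :
    ∀ N : ℕ, ∀ a : ℕ → ℝ, a ∈ Sset K → ∀ i : ℕ, a i = 0 →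
      piQ q (shf (i+1) a) ≤ Cq q K + (1/q)^N * Mq q K := by
  have hq0 : (0:ℝ) < q := by linarith
  have hr0 : (0:ℝ) ≤ 1/q := le_of_lt (inv_q_pos hq)
  have hr1 : 1/q ≤ 1 := le_of_lt (inv_q_lt_one hq)
  intro N
  induction N with
  | zero =>
    intro a ha i hi
    have hle := piQ_le hq (shf_digit ha.1 (i+1))
    have hM : Cq q K + (1/q)^0 * Mq q K = q/(q-1) := by rw [pow_zero, one_mul, Mq]; ring
    rw [hM]
    have h1 : 1/(q-1) ≤ q/(q-1) := by
      apply div_le_div_of_nonneg_right (by linarith) (by linarith)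
    linarith
  | succ N ih =>
    intro a ha i hi
    obtain ⟨p, hpK, hp0, hpl⟩ := after_zero hK ha hi
    set A := Cq q K + (1/q)^N * Mq q K with hA
    have hd1 : IsDigitSeq (shf (i+1) a) := shf_digit ha.1 (i+1)
    have hsplit := piQ_shift hq hd1 (p+1)
    have hsum : ∑ t ∈ Finset.range (p+1), (shf (i+1) a) t / q^(t+1)
        = ∑ t ∈ Finset.range p, (1/q)^(t+1) := by
      rw [Finset.sum_range_succ]
      have hzero : (shf (i+1) a) p / q^(p+1) = 0 := by
        show a (p + (i+1)) / q^(p+1) = 0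
        rw [show p + (i+1) = i+1+p by omega, hp0, zero_div]
      rw [hzero, add_zero]
      refine Finset.sum_congr rfl (fun t ht => ?_)
      rw [Finset.mem_range] at ht
      show a (t + (i+1)) / q^(t+1) = _
      rw [show t + (i+1) = i+1+t by omega, hpl t ht, one_div_pow]
    have hshsh : shf (p+1) (shf (i+1) a) = shf ((i+1+p)+1) a := by
      rw [shf_shf, show (i+1)+(p+1) = (i+1+p)+1 by omega]
    have hIH : piQ q (shf ((i+1+p)+1) a) ≤ A := ih a ha (i+1+p) hp0
    have hpos : (0:ℝ) < q^(p+1) := by positivity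
    have hA0 : 0 ≤ A := by
      have hCn := Cq_nonneg hq hK
      have hMn' := Mq_nonneg hq hK
      have hpN : (0:ℝ) ≤ (1/q)^N := by positivity
      exact add_nonneg hCn (mul_nonneg hpN hMn')
    have hA1 : A * (1 - 1/q) ≤ 1 := by
      have hMn := Mq_nonneg hq hK
      have hrN : (1/q)^N ≤ 1 := pow_le_one₀ hr0 hr1
      have hAle : A ≤ q/(q-1) := by
        have : (1/q)^N * Mq q K ≤ 1 * Mq q K := mul_le_mul_of_nonneg_right hrN hMn
        simp only [hA]
        rw [Mq] at *
        linarith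
      have h2 : (0:ℝ) ≤ 1 - 1/q := by linarith
      have hne1 : q ≠ 0 := ne_of_gt hq0
      have hne2 : q - 1 ≠ 0 := by linarith
      calc A * (1 - 1/q) ≤ (q/(q-1)) * (1 - 1/q) := mul_le_mul_of_nonneg_right hAle h2
        _ = 1 := by field_simp
    have step1 : piQ q (shf (i+1) a)
        ≤ (∑ t ∈ Finset.range p, (1/q)^(t+1)) + (1/q)^(p+1) * A := by
      rw [hsplit, hsum, hshsh]
      have hinv : ((q:ℝ) ^ (p+1))⁻¹ = (1/q)^(p+1) := by
        rw [one_div_pow, one_div]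
      have hb : piQ q (shf ((i+1+p)+1) a) / q^(p+1) ≤ A * ((1/q)^(p+1)) := by
        rw [div_eq_mul_inv, hinv]
        exact mul_le_mul_of_nonneg_right hIH (by positivity)
      linarith [hb]
    have step2 : (∑ t ∈ Finset.range p, (1/q)^(t+1)) + (1/q)^(p+1) * A
        ≤ (∑ t ∈ Finset.range (K-1), (1/q)^(t+1)) + (1/q)^K * A := by
      have := mono_aux hq hA0 hA1 (K-1-p) p
      rw [show p + (K-1-p) = K-1 by omega] at this
      rw [show K-1+1 = K by omega] at this
      exact this
    have step3 : (∑ t ∈ Finset.range (K-1), (1/q)^(t+1)) + (1/q)^K * A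
        ≤ Cq q K + (1/q)^(N+1) * Mq q K := by
      have hfix := Cq_fix hq hK
      have hMn := Mq_nonneg hq hK
      have hple : (1/q)^(K+N) ≤ (1/q)^(N+1) :=
        pow_le_pow_of_le_one hr0 hr1 (by omega)
      have hexp : (1/q)^K * ((1/q)^N * Mq q K) = (1/q)^(K+N) * Mq q K := by
        rw [← mul_assoc, ← pow_add]
      have : (1/q)^(K+N) * Mq q K ≤ (1/q)^(N+1) * Mq q K :=
        mul_le_mul_of_nonneg_right hple hMn
      simp only [hA]
      rw [mul_add, hexp]
      linarith
    linarith

lemma tail_after_zero_lt_one (hq1 : 1 < q) {K : ℕ} (hK : 1 ≤ K)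
    (hG : ∑ t ∈ Finset.range K, (1/q)^(t+1) < 1)
    {a : ℕ → ℝ} (ha : a ∈ Sset K) {i : ℕ} (hi : a i = 0) :
    piQ q (shf (i+1) a) < 1 := by
  have hle : piQ q (shf (i+1) a) ≤ Cq q K := by
    have htend : Filter.Tendsto (fun N : ℕ => Cq q K + (1/q)^N * Mq q K)
        Filter.atTop (nhds (Cq q K + 0 * Mq q K)) :=
      Filter.Tendsto.add tendsto_const_nhds
        ((tendsto_pow_atTop_nhds_zero_of_lt_one (le_of_lt (inv_q_pos hq1))
          (inv_q_lt_one hq1)).mul_const _)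
    rw [zero_mul, add_zero] at htend
    exact ge_of_tendsto' htend (fun N => tail_bound_N hq1 hK N a ha i hi)
  exact lt_of_le_of_lt hle (Cq_lt_one hq1 hK hG)

lemma sigma_of_mem_S (hq1 : 1 < q) {K : ℕ} (hK : 1 ≤ K)
    (hG : ∑ t ∈ Finset.range K, (1/q)^(t+1) < 1)
    {a : ℕ → ℝ} (ha : a ∈ Sset K) :
    SigmaSet q (piQ q a) = {a} := by
  have hq0 : (0:ℝ) < q := by linarith
  have had := ha.1
  ext b
  simp only [Set.mem_singleton_iff, mem_sigma]
  constructor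
  · rintro ⟨hbd, hbpi⟩
    have step : ∀ n, piQ q (shf n a) = piQ q (shf n b) →
        a n = b n ∧ piQ q (shf (n+1) a) = piQ q (shf (n+1) b) := by
      intro n h
      have hsa := piQ_step hq1 (shf_digit had n)
      have hsb := piQ_step hq1 (shf_digit hbd n)
      have ea : (shf n a) 0 = a n := by show a (0+n) = a n; rw [Nat.zero_add]
      have eb : (shf n b) 0 = b n := by show b (0+n) = b n; rw [Nat.zero_add]
      have sa : shf 1 (shf n a) = shf (n+1) a := shf_shf n 1 a
      have sb : shf 1 (shf n b) = shf (n+1) b := shf_shf n 1 b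
      rw [ea, sa] at hsa
      rw [eb, sb] at hsb
      have hcomb : a n / q + piQ q (shf (n+1) a) / q
          = b n / q + piQ q (shf (n+1) b) / q := by
        rw [← hsa, ← hsb]; exact h
      have hq0' : q ≠ 0 := ne_of_gt hq0
      have hcomb' : a n + piQ q (shf (n+1) a) = b n + piQ q (shf (n+1) b) := by
        field_simp at hcomb
        linarith
      rcases had n with h0a | h0a <;> rcases hbd n with h0b | h0b
      · refine ⟨by rw [h0a, h0b], ?_⟩
        rw [h0a, h0b] at hcomb'
        linarith
      · exfalso
        rw [h0a, h0b] at hcomb'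
        have h1 : piQ q (shf (n+1) a) = 1 + piQ q (shf (n+1) b) := by linarith
        have h2 : 0 ≤ piQ q (shf (n+1) b) := piQ_nonneg hq1 (shf_digit hbd (n+1))
        have h3 : piQ q (shf (n+1) a) < 1 := tail_after_zero_lt_one hq1 hK hG ha h0a
        linarith
      · exfalso
        rw [h0a, h0b] at hcomb'
        have h1 : piQ q (shf (n+1) b) = 1 + piQ q (shf (n+1) a) := by linarith
        have h2 : piQ q (shf (n+1) b) ≤ 1/(q-1) := piQ_le hq1 (shf_digit hbd (n+1))
        have hcompl : piQ q (fun j => 1 - (shf (n+1) a) j)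
            = 1/(q-1) - piQ q (shf (n+1) a) := piQ_compl hq1 (shf_digit had (n+1))
        have hmem : (fun j => 1 - a j) ∈ Sset K := Sset_compl ha
        have hzero : (fun j => 1 - a j) n = 0 := by simp [h0a]
        have h3 : piQ q (shf (n+1) (fun j => 1 - a j)) < 1 :=
          tail_after_zero_lt_one hq1 hK hG hmem hzero
        have heq : shf (n+1) (fun j => 1 - a j) = fun j => 1 - (shf (n+1) a) j := rfl
        rw [heq, hcompl] at h3
        linarith
      · refine ⟨by rw [h0a, h0b], ?_⟩
        rw [h0a, h0b] at hcomb'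
        linarith
    have main : ∀ n, piQ q (shf n a) = piQ q (shf n b) := by
      intro n
      induction n with
      | zero => rw [shf_zero, shf_zero, hbpi]
      | succ n ih => exact (step n ih).2
    funext n
    exact ((step n (main n)).1).symm
  · rintro rfl
    exact ⟨ha.1, rfl⟩

lemma one_div_qsub1_lt (hq1 : 1 < q) (hphi : q + 1 < q^2) : 1/(q-1) < 1 + 1/q := by
  have hq0 : (0:ℝ) < q := by linarith
  have h1 : (0:ℝ) < q - 1 := by linarith
  rw [div_lt_iff₀ h1]
  have h2 : (1 + 1/q) * (q - 1) = q - 1/q := by field_simp; ring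
  rw [h2]
  rw [show q - 1/q = (q^2 - 1)/q by field_simp]
  rw [lt_div_iff₀ hq0]
  linarith

lemma iter_ge_invq (hq1 : 1 < q) {v' : ℝ} (hv' : 1 ≤ v') :
    ∀ n : ℕ, 1/q ≤ (fun y => (y+1)/q)^[n] (v'/q) := by
  have hq0 : (0:ℝ) < q := by linarith
  intro n
  induction n with
  | zero =>
    simp only [Function.iterate_zero, id]
    apply div_le_div_of_nonneg_right hv' hq0.le
  | succ n ih =>
    rw [Function.iterate_succ_apply']
    have h1 : (1:ℝ) ≤ (fun y => (y+1)/q)^[n] (v'/q) + 1 := by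
      have : (0:ℝ) < 1/q := inv_q_pos hq1
      linarith
    calc 1/q ≤ ((fun y => (y+1)/q)^[n] (v'/q) + 1)/q := by
          apply div_le_div_of_nonneg_right h1 hq0.le
      _ = _ := rfl

lemma encard_iter (hq1 : 1 < q) (hphi : q + 1 < q^2) {v' : ℝ} (hv' : 1 ≤ v') :
    ∀ n : ℕ, 1 ≤ n →
      (SigmaSet q ((fun y => (y+1)/q)^[n] (v'/q))).encard
        = (SigmaSet q v').encard + (SigmaSet q (v'-1)).encard := by
  have hq0 : (0:ℝ) < q := by linarith
  have hlow : ∀ z : ℝ, 1 + 1/q ≤ z → SigmaSet q z = ∅ := by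
    intro z hz
    apply sigma_empty_hi hq1
    have := one_div_qsub1_lt hq1 hphi
    linarith
  intro n hn
  induction n, hn using Nat.le_induction with
  | base =>
    rw [Function.iterate_one]
    have e1 : q * ((v'/q + 1)/q) = v'/q + 1 := by field_simp
    have e2 : q * ((v'/q + 1)/q) - 1 = v'/q := by rw [e1]; ring
    rw [encard_split hq1, e2, e1]
    have h3 : SigmaSet q (v'/q + 1) = ∅ := by
      apply hlow
      have : 1/q ≤ v'/q := div_le_div_of_nonneg_right hv' hq0.le
      linarith
    rw [h3, Set.encard_empty, zero_add]
    have e3 : q * (v'/q) = v' := by field_simp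
    have e4 : q * (v'/q) - 1 = v' - 1 := by rw [e3]
    rw [encard_split hq1, e4, e3]
  | succ n hn ih =>
    rw [Function.iterate_succ_apply']
    set u := (fun y => (y+1)/q)^[n] (v'/q) with hu
    have hui : 1/q ≤ u := iter_ge_invq hq1 hv' n
    have e1 : q * ((u + 1)/q) = u + 1 := by field_simp
    have e2 : q * ((u + 1)/q) - 1 = u := by rw [e1]; ring
    show (SigmaSet q ((u+1)/q)).encard = _
    rw [encard_split hq1, e2, e1]
    have h3 : SigmaSet q (u + 1) = ∅ := by
      apply hlow
      linarith
    rw [h3, Set.encard_empty, zero_add]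
    exact ih


lemma encard_gMap (hq1 : 1 < q) (hphi : q + 1 < q^2) {kk : ℕ} (hk1 : 1 ≤ kk - 1)
    {v' : ℝ} (hv' : 1 ≤ v') :
    (SigmaSet q (gMap q kk v')).encard
      = (SigmaSet q v').encard + (SigmaSet q (v'-1)).encard := by
  unfold gMap
  exact encard_iter hq1 hphi hv' (kk-1) hk1

end MultExp

open MultExp in
theorem nonempty_intersection_of_Sk_images
    (k m : ℕ) (hk : 3 ≤ k) (hm : 1 ≤ m) (qk1 : ℝ) (hqk1 : IsBonacci (k - 1) qk1)
    (q : ℝ) (hq : q ∈ Set.Ioo (1 : ℝ) 2) (hq' : qk1 < q)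
    (hne : ((⋂ i ∈ Finset.Icc 0 m,
          (gMap q k)^[i] '' ((fun u => u + 1) '' (piQ q '' Sset (k - 1)))) ∩
        ((gMap q k)^[m] '' (piQ q '' Sset (k - 1)))).Nonempty) :
    q ∈ Bset ((m : ℕ∞) + 2) := by
  classical
  obtain ⟨hq1, hq2⟩ := hq
  have hq0 : (0:ℝ) < q := by linarith
  have hK1 : 1 ≤ k - 1 := by omega
  obtain ⟨⟨hqk1a, hqk1b⟩, hqk1eq⟩ := hqk1
  have hqk10 : (0:ℝ) < qk1 := by linarith
  -- the k-bonacci relation in reciprocal form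
  have hsum1 : ∑ t ∈ Finset.range (k-1), (1/qk1)^(t+1) = 1 := by
    have h1 : ∀ t ∈ Finset.range (k-1), (1/qk1)^(t+1) = qk1^(k-1-1-t) / qk1^(k-1) := by
      intro t ht
      rw [Finset.mem_range] at ht
      rw [one_div_pow, div_eq_div_iff (by positivity) (by positivity), one_mul, ← pow_add]
      congr 1
      omega
    rw [Finset.sum_congr rfl h1, ← Finset.sum_div,
      Finset.sum_range_reflect (fun i => qk1^i) (k-1), ← hqk1eq]
    exact div_self (by positivity)
  have hG : ∑ t ∈ Finset.range (k-1), (1/q)^(t+1) < 1 := by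
    have hlt : ∑ t ∈ Finset.range (k-1), (1/q)^(t+1)
        < ∑ t ∈ Finset.range (k-1), (1/qk1)^(t+1) := by
      refine Finset.sum_lt_sum_of_nonempty ?_ ?_
      · rw [Finset.nonempty_range_iff]; omega
      · intro t _
        refine pow_lt_pow_left₀ ?_ (by positivity) (by omega)
        rw [div_lt_div_iff₀ hq0 hqk10]
        linarith
    linarith [hlt, hsum1.le, hsum1.ge]
  have hphi : q + 1 < q^2 := by
    have h2 : ∑ t ∈ Finset.range 2, (1/q)^(t+1) ≤ ∑ t ∈ Finset.range (k-1), (1/q)^(t+1) := by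
      apply Finset.sum_le_sum_of_subset_of_nonneg
      · exact Finset.range_subset_range.mpr (by omega)
      · intro t _ _; positivity
    have h2' : 1/q + (1/q)^2 ≤ ∑ t ∈ Finset.range (k-1), (1/q)^(t+1) := by
      have : ∑ t ∈ Finset.range 2, (1/q)^(t+1) = 1/q + (1/q)^2 := by
        simp [Finset.sum_range_succ]
      linarith [h2, this.symm.le, this.le]
    have h3 : 1/q + (1/q)^2 < 1 := by linarith
    have hq2pos : (0:ℝ) < q^2 := by positivity
    have h4 := mul_lt_mul_of_pos_right h3 hq2pos
    have e : (1/q + (1/q)^2) * q^2 = q + 1 := by field_simp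
    rw [e, one_mul] at h4
    exact h4
  obtain ⟨x, hx1, hx2⟩ := hne
  rw [Set.mem_iInter₂] at hx1
  have H : ∀ i : ℕ, ∃ aa : ℕ → ℝ, i ≤ m →
      aa ∈ Sset (k-1) ∧ (gMap q k)^[i] (piQ q aa + 1) = x := by
    intro i
    by_cases hi : i ≤ m
    · obtain ⟨y, ⟨z, ⟨aa, haa, rfl⟩, rfl⟩, hyx⟩ :=
        hx1 i (Finset.mem_Icc.mpr ⟨Nat.zero_le _, hi⟩)
      exact ⟨aa, fun _ => ⟨haa, hyx⟩⟩
    · exact ⟨fun _ => 0, fun h => absurd h hi⟩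
  choose b hb using H
  obtain ⟨z0, ⟨c, hcS, rfl⟩, hcx⟩ := hx2
  have hgsm : StrictMono (gMap q k) := by
    have h1 : StrictMono (fun y : ℝ => (y+1)/q) := fun s t hst => by
      simp only
      rw [div_lt_div_iff₀ hq0 hq0]
      nlinarith
    intro s t hst
    exact (h1.iterate (k-1)) (by rw [div_lt_div_iff₀ hq0 hq0]; nlinarith)
  have hginj : Function.Injective (gMap q k) := hgsm.injective
  set v : ℕ → ℝ := fun i => piQ q (b i) + 1 with hv
  have hbS : ∀ i, i ≤ m → b i ∈ Sset (k-1) := fun i hi => (hb i hi).1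
  have hbx : ∀ i, i ≤ m → (gMap q k)^[i] (v i) = x := fun i hi => (hb i hi).2
  have hv1 : ∀ i, i ≤ m → 1 ≤ v i := by
    intro i hi
    have := piQ_nonneg hq1 (hbS i hi).1
    simp only [hv]
    linarith
  have hvchain : ∀ i, i < m → v i = gMap q k (v (i+1)) := by
    intro i hi
    have hA := hbx i (by omega)
    have hB := hbx (i+1) (by omega)
    rw [Function.iterate_succ_apply] at hB
    exact (hginj.iterate i) (hA.trans hB.symm)
  have hvm : v m = piQ q c := by
    have hA := hbx m le_rfl
    exact (hginj.iterate m) (hA.trans hcx.symm)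
  have hsig : ∀ t, t ≤ m → (SigmaSet q (v (m - t))).encard = (t : ℕ∞) + 1 := by
    intro t
    induction t with
    | zero =>
      intro _
      rw [Nat.sub_zero, hvm, sigma_of_mem_S hq1 hK1 hG hcS, Set.encard_singleton]
      simp
    | succ t ih =>
      intro ht
      have hstep := hvchain (m - (t+1)) (by omega)
      rw [show m - (t+1) + 1 = m - t by omega] at hstep
      rw [hstep, encard_gMap hq1 hphi hK1 (hv1 (m-t) (by omega)),
        ih (by omega)]
      have hvm1 : v (m-t) - 1 = piQ q (b (m-t)) := by simp only [hv]; ring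
      rw [hvm1, sigma_of_mem_S hq1 hK1 hG (hbS (m-t) (by omega)), Set.encard_singleton]
      push_cast
      ring
  have hx0 : x = v 0 := by
    have h0 := hbx 0 (by omega)
    simpa using h0.symm
  have hxe : (SigmaSet q x).encard = (m : ℕ∞) + 1 := by
    have h5 := hsig m le_rfl
    rw [Nat.sub_self] at h5
    rw [hx0]
    exact h5
  have hxge1 : 1 ≤ x := by rw [hx0]; exact hv1 0 (by omega)
  have hxle : x ≤ 1/(q-1) := by
    have hne' : (SigmaSet q x).Nonempty := by
      rw [Set.nonempty_iff_ne_empty]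
      intro hemp
      rw [hemp, Set.encard_empty] at hxe
      have : ((m : ℕ∞) + 1) ≠ 0 := by simp
      exact this hxe.symm
    obtain ⟨e, he⟩ := hne'
    rw [← he.2]
    exact piQ_le hq1 he.1
  refine ⟨⟨hq1, hq2⟩, x/q, ⟨?_, ?_⟩, ?_⟩
  · exact div_nonneg (by linarith) hq0.le
  · calc x/q ≤ x := div_le_self (by linarith) (by linarith)
      _ ≤ 1/(q-1) := hxle
  · have e1 : q * (x/q) = x := by field_simp
    have e2 : q * (x/q) - 1 = piQ q (b 0) := by
      rw [e1, hx0]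
      simp only [hv]
      ring
    rw [encard_split hq1, e2, e1, hxe,
      sigma_of_mem_S hq1 hK1 hG (hbS 0 (by omega)), Set.encard_singleton]
    rw [add_assoc]
    norm_num
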